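/- arXiv:2306.00730 — 2 statements merged into one kernel-verified Lean document; each statement's English description precedes it below -/
import Mathlib

section
/- If a density matrix ρ on ℂ^D satisfies tr(ρ²) ≥ 1 - δ, then there exists a unit vector φ such that the trace norm ‖ρ - |φ⟩⟨φ|‖₁ ≤ 2δ. -/
open Matrix ComplexOrder

/-- The trace norm of a complex matrix: `tr √(AᴴA)`. -/
noncomputable def traceNorm {D : ℕ} (A : Matrix (Fin D) (Fin D) ℂ) : ℝ :=
  (((Matrix.posSemidef_conjTranspose_mul_self A).1.eigenvectorUnitary.1 *
    diagonal (fun i => ((Real.sqrt ((Matrix.posSemidef_conjTranspose_mul_self A).1.eigenvalues i) : ℝ) : ℂ)) *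
    (star (Matrix.posSemidef_conjTranspose_mul_self A).1.eigenvectorUnitary :
      Matrix (Fin D) (Fin D) ℂ)).trace).re

lemma diag_unitary_collapse {D : ℕ} (U : Matrix.unitaryGroup (Fin D) ℂ)
    (d e : Fin D → ℝ) :
    ((U : Matrix (Fin D) (Fin D) ℂ) * Matrix.diagonal (fun i => (d i : ℂ)) * star (U : Matrix (Fin D) (Fin D) ℂ)) *
      ((U : Matrix (Fin D) (Fin D) ℂ) * Matrix.diagonal (fun i => (e i : ℂ)) * star (U : Matrix (Fin D) (Fin D) ℂ))
    = (U : Matrix (Fin D) (Fin D) ℂ) * Matrix.diagonal (fun i => ((d i * e i : ℝ) : ℂ)) * star (U : Matrix (Fin D) (Fin D) ℂ) := by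
  set V : Matrix (Fin D) (Fin D) ℂ := (U : Matrix (Fin D) (Fin D) ℂ) with hV
  have h1 : star V * V = 1 := (Matrix.mem_unitaryGroup_iff').mp U.2
  have hstep : (V * Matrix.diagonal (fun i => (d i : ℂ)) * star V) *
      (V * Matrix.diagonal (fun i => (e i : ℂ)) * star V)
      = V * (Matrix.diagonal (fun i => (d i : ℂ)) * ((star V * V) *
        (Matrix.diagonal (fun i => (e i : ℂ)) * star V))) := by
    simp only [Matrix.mul_assoc]
  rw [hstep, h1, one_mul]
  simp only [← Matrix.mul_assoc]
  rw [Matrix.mul_assoc V (Matrix.diagonal _) (Matrix.diagonal _),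
    Matrix.diagonal_mul_diagonal]
  congr 2
  funext i
  push_cast
  ring

open scoped MatrixOrder in
lemma traceNorm_unitary_diag {D : ℕ} (U : Matrix.unitaryGroup (Fin D) ℂ)
    (d : Fin D → ℝ) :
    traceNorm ((U : Matrix (Fin D) (Fin D) ℂ) * Matrix.diagonal (fun i => (d i : ℂ)) * star (U : Matrix (Fin D) (Fin D) ℂ))
      = ∑ i, |d i| := by
  set V : Matrix (Fin D) (Fin D) ℂ := (U : Matrix (Fin D) (Fin D) ℂ) with hV
  have h1 : star V * V = 1 := (Matrix.mem_unitaryGroup_iff').mp U.2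
  set A : Matrix (Fin D) (Fin D) ℂ := V * Matrix.diagonal (fun i => (d i : ℂ)) * star V with hA
  set B : Matrix (Fin D) (Fin D) ℂ := V * Matrix.diagonal (fun i => ((|d i| : ℝ) : ℂ)) * star V with hB
  have hAH : Aᴴ = A := by
    rw [hA, Matrix.star_eq_conjTranspose]
    simp only [Matrix.conjTranspose_mul, Matrix.conjTranspose_conjTranspose,
      Matrix.diagonal_conjTranspose]
    have hst : (star fun i => ((d i : ℝ) : ℂ)) = fun i => ((d i : ℝ) : ℂ) := by
      funext i
      simp [Complex.conj_ofReal]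
    rw [hst, ← Matrix.mul_assoc]
  have hBpsd : B.PosSemidef := by
    have hd : (Matrix.diagonal (fun i => ((|d i| : ℝ) : ℂ))).PosSemidef := by
      refine Matrix.posSemidef_diagonal_iff.mpr fun i => ?_
      exact_mod_cast Complex.zero_le_real.mpr (abs_nonneg _)
    have := hd.mul_mul_conjTranspose_same V
    rw [hB]
    simpa [Matrix.star_eq_conjTranspose] using this
  have hB2 : B ^ 2 = Aᴴ * A := by
    rw [hAH, pow_two, hA, hB, diag_unitary_collapse, diag_unitary_collapse]
    have heq : (fun i => ((|d i| * |d i| : ℝ) : ℂ)) = fun i => ((d i * d i : ℝ) : ℂ) := by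
      funext i
      rw [abs_mul_abs_self]
    rw [heq]
  have hP := Matrix.posSemidef_conjTranspose_mul_self A
  set W : Matrix (Fin D) (Fin D) ℂ := (hP.1.eigenvectorUnitary : Matrix (Fin D) (Fin D) ℂ) with hW
  set C : Matrix (Fin D) (Fin D) ℂ := W * Matrix.diagonal (fun i => ((Real.sqrt (hP.1.eigenvalues i) : ℝ) : ℂ)) * star W with hC
  have hCpsd : C.PosSemidef := by
    have hd : (Matrix.diagonal (fun i => ((Real.sqrt (hP.1.eigenvalues i) : ℝ) : ℂ))).PosSemidef := by
      refine Matrix.posSemidef_diagonal_iff.mpr fun i => ?_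
      exact_mod_cast Complex.zero_le_real.mpr (Real.sqrt_nonneg _)
    have := hd.mul_mul_conjTranspose_same W
    rw [hC]
    simpa [Matrix.star_eq_conjTranspose] using this
  have hC2 : C * C = Aᴴ * A := by
    rw [hC, diag_unitary_collapse]
    conv_rhs => rw [hP.1.spectral_theorem, Unitary.conjStarAlgAut_apply]
    congr 2
    ext j k
    rw [diagonal_apply, diagonal_apply]
    split_ifs with hjk
    · subst hjk
      simp [Real.mul_self_sqrt (hP.eigenvalues_nonneg j)]
    · rfl
  have hsqrt : B = C := by
    have e1 := CFC.sqrt_unique (a := Aᴴ * A) (b := B) (by rw [← pow_two]; exact hB2) hBpsd.nonneg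
    have e2 := CFC.sqrt_unique (a := Aᴴ * A) (b := C) hC2 hCpsd.nonneg
    rw [← e1, e2]
  have htr : B.trace = ∑ i, ((|d i| : ℝ) : ℂ) := by
    rw [hB, Matrix.trace_mul_cycle, h1, one_mul, Matrix.trace_diagonal]
  rw [traceNorm]
  change C.trace.re = _
  rw [← hsqrt, htr]
  push_cast
  simp

theorem stmt_0 {D : ℕ} (ρ : Matrix (Fin D) (Fin D) ℂ) (δ : ℝ) (hδ : 0 ≤ δ)
    (hρ : ρ.PosSemidef) (htr : ρ.trace = 1)
    (hpur : 1 - δ ≤ ((ρ * ρ).trace).re) :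
    ∃ φ : Fin D → ℂ, (∑ i, ‖φ i‖ ^ 2 = 1) ∧
      traceNorm (ρ - Matrix.vecMulVec φ (star φ)) ≤ 2 * δ := by
  rcases Nat.eq_zero_or_pos D with hD | hD
  · subst hD
    simp [Matrix.trace] at htr
  have hne : (Finset.univ : Finset (Fin D)).Nonempty :=
    Finset.univ_nonempty_iff.mpr (Fin.pos_iff_nonempty.mp hD)
  set hH := hρ.1
  set lam : Fin D → ℝ := hH.eigenvalues with hlam
  set U := hH.eigenvectorUnitary with hU
  set V : Matrix (Fin D) (Fin D) ℂ := (U : Matrix (Fin D) (Fin D) ℂ) with hV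
  have h1 : star V * V = 1 := (Matrix.mem_unitaryGroup_iff').mp U.2
  have hspec : ρ = V * Matrix.diagonal (fun i => (lam i : ℂ)) * star V := by
    have := hH.spectral_theorem
    rw [Unitary.conjStarAlgAut_apply] at this
    exact this
  have hnn : ∀ i, 0 ≤ lam i := fun i => hρ.eigenvalues_nonneg i
  have htrsum : ∑ i, lam i = 1 := by
    have : ρ.trace = ∑ i, (lam i : ℂ) := by
      rw [hspec, Matrix.trace_mul_cycle, h1, one_mul, Matrix.trace_diagonal]
    rw [this] at htr
    exact_mod_cast htr
  have hpur2 : 1 - δ ≤ ∑ i, lam i ^ 2 := by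
    have h2 : ρ * ρ = V * Matrix.diagonal (fun i => ((lam i * lam i : ℝ) : ℂ)) * star V := by
      rw [hspec, diag_unitary_collapse]
    have : (ρ * ρ).trace = ∑ i, ((lam i * lam i : ℝ) : ℂ) := by
      rw [h2, Matrix.trace_mul_cycle, h1, one_mul, Matrix.trace_diagonal]
    rw [this] at hpur
    calc 1 - δ ≤ _ := hpur
      _ = ∑ i, lam i ^ 2 := by push_cast; simp [sq]
  obtain ⟨i₀, -, hmax⟩ := Finset.exists_max_image Finset.univ lam hne
  have hmax' : ∀ i, lam i ≤ lam i₀ := fun i => hmax i (Finset.mem_univ i)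
  have hlam1 : lam i₀ ≤ 1 := by
    rw [← htrsum]
    exact Finset.single_le_sum (fun i _ => hnn i) (Finset.mem_univ i₀)
  have hlamlb : 1 - δ ≤ lam i₀ := by
    have : ∑ i, lam i ^ 2 ≤ lam i₀ := by
      calc ∑ i, lam i ^ 2 ≤ ∑ i, lam i₀ * lam i := by
            refine Finset.sum_le_sum fun i _ => ?_
            rw [sq]
            exact mul_le_mul_of_nonneg_right (hmax' i) (hnn i)
        _ = lam i₀ * ∑ i, lam i := by rw [Finset.mul_sum]
        _ = lam i₀ := by rw [htrsum, mul_one]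
    linarith
  set φ : Fin D → ℂ := ⇑(hH.eigenvectorBasis i₀) with hφ
  refine ⟨φ, ?_, ?_⟩
  · have hnorm : ‖hH.eigenvectorBasis i₀‖ = 1 := hH.eigenvectorBasis.orthonormal.1 i₀
    have hEq := EuclideanSpace.norm_eq (hH.eigenvectorBasis i₀)
    rw [hnorm] at hEq
    have h2 := congrArg (· ^ 2) hEq
    simp only [one_pow] at h2
    rw [Real.sq_sqrt (Finset.sum_nonneg fun i _ => sq_nonneg _)] at h2
    exact h2.symm
  · have hP : Matrix.vecMulVec φ (star φ)
        = V * Matrix.diagonal (fun i => ((if i = i₀ then (1:ℝ) else 0 : ℝ) : ℂ)) * star V := by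
      ext j k
      simp only [Matrix.vecMulVec_apply, Pi.star_apply, Matrix.mul_apply,
        Matrix.diagonal_apply, Matrix.star_apply, mul_ite, mul_zero, Finset.sum_ite_eq',
        Finset.mem_univ, if_true, ite_mul, zero_mul]
      have hterm : ∀ x, V j x * ((if x = i₀ then (1:ℝ) else 0 : ℝ) : ℂ) * star (V k x)
          = if x = i₀ then V j x * star (V k x) else 0 := by
        intro x
        split <;> simp
      rw [Finset.sum_congr rfl (fun x _ => hterm x),
        Finset.sum_ite_eq' Finset.univ i₀ (fun x => V j x * star (V k x))]
      simp only [Finset.mem_univ, if_true]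
      rw [hV, hU]
      simp [Matrix.IsHermitian.eigenvectorUnitary_apply, hφ]
    have hdiff : ρ - Matrix.vecMulVec φ (star φ)
        = V * Matrix.diagonal (fun i => ((lam i - if i = i₀ then (1:ℝ) else 0 : ℝ) : ℂ)) * star V := by
      rw [hspec, hP, ← Matrix.sub_mul, ← Matrix.mul_sub, Matrix.diagonal_sub]
      congr 2
      funext i
      push_cast
      ring
    rw [hdiff, traceNorm_unitary_diag]
    have hsplit : ∑ i, |lam i - if i = i₀ then (1:ℝ) else 0|
        = |lam i₀ - 1| + ∑ i ∈ Finset.univ.erase i₀, |lam i| := by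
      rw [← Finset.add_sum_erase _ _ (Finset.mem_univ i₀)]
      simp only [if_pos rfl]
      congr 1
      refine Finset.sum_congr rfl fun i hi => ?_
      rw [if_neg (Finset.ne_of_mem_erase hi), sub_zero]
    rw [hsplit]
    have hh1 : |lam i₀ - 1| = 1 - lam i₀ := by
      rw [abs_sub_comm]; exact abs_of_nonneg (by linarith)
    have hh2 : ∑ i ∈ Finset.univ.erase i₀, |lam i| = 1 - lam i₀ := by
      have e1 : ∑ i ∈ Finset.univ.erase i₀, |lam i| = ∑ i ∈ Finset.univ.erase i₀, lam i :=
        Finset.sum_congr rfl fun i _ => abs_of_nonneg (hnn i)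
      have e2 : lam i₀ + ∑ i ∈ Finset.univ.erase i₀, lam i = 1 := by
        rw [Finset.add_sum_erase _ _ (Finset.mem_univ i₀)]
        exact htrsum
      linarith
    rw [hh1, hh2]
    linarith
end

section
/- Let Z be a square complex matrix with ‖I - Z†Z‖ ≤ δ in operator norm. Then there exists a unitary matrix O with ‖Z - O‖ ≤ √δ. The analogous statement holds with Z real and O orthogonal. -/
open Matrix ComplexOrder

/-- The operator norm of a square matrix over `ℂ` or `ℝ`, acting on Euclidean space. -/
noncomputable def opNorm {𝕜 : Type*} [RCLike 𝕜] {n : ℕ} (A : Matrix (Fin n) (Fin n) 𝕜) : ℝ :=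
  ‖Matrix.toEuclideanCLM (𝕜 := 𝕜) A‖


section Helpers
open scoped Matrix.Norms.L2Operator ComplexOrder

variable {𝕜 : Type*} [RCLike 𝕜] {n : ℕ}

lemma sq_sqrt_sub_one_le {x : ℝ} (hx : 0 ≤ x) : |Real.sqrt x - 1| ≤ Real.sqrt |x - 1| := by
  rw [← Real.sqrt_sq_eq_abs]
  apply Real.sqrt_le_sqrt
  have hs := Real.sq_sqrt hx
  have hsn := Real.sqrt_nonneg x
  rcases le_total 1 x with h | h
  · have h1 : 1 ≤ Real.sqrt x := by nlinarith
    rw [abs_of_nonneg (by linarith)]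
    nlinarith
  · have h1 : Real.sqrt x ≤ 1 := by nlinarith
    rw [abs_of_nonpos (by linarith)]
    nlinarith

lemma l2_norm_diagonal_le (v : Fin n → 𝕜) {M : ℝ} (hM : 0 ≤ M) (h : ∀ i, ‖v i‖ ≤ M) :
    ‖diagonal v‖ ≤ M := by
  rw [Matrix.cstar_norm_def]
  apply ContinuousLinearMap.opNorm_le_bound _ hM
  intro x
  have hx : ∀ i, (Matrix.toEuclideanCLM (n := Fin n) (𝕜 := 𝕜) (diagonal v) x) i
      = v i * x i := by
    intro i
    have := Matrix.ofLp_toEuclideanCLM (n := Fin n) (𝕜 := 𝕜) (diagonal v) x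
    have h2 : (WithLp.equiv 2 (Fin n → 𝕜)) ((toEuclideanCLM (n := Fin n) (𝕜 := 𝕜) (diagonal v)) x) i = (toLin' (diagonal v)) ((WithLp.equiv 2 (Fin n → 𝕜)) x) i := by exact congrFun this i
    simpa [Matrix.toLin'_apply, Matrix.mulVec_diagonal] using h2
  rw [EuclideanSpace.norm_eq, EuclideanSpace.norm_eq]
  rw [show M * Real.sqrt (∑ i, ‖x i‖^2) = Real.sqrt (M^2 * ∑ i, ‖x i‖^2) by
    rw [Real.sqrt_mul (by positivity), Real.sqrt_sq hM]]
  apply Real.sqrt_le_sqrt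
  rw [Finset.mul_sum]
  apply Finset.sum_le_sum
  intro i _
  rw [hx i, norm_mul, mul_pow]
  exact mul_le_mul_of_nonneg_right (pow_le_pow_left₀ (norm_nonneg _) (h i) 2) (by positivity)

lemma l2_norm_diagonal_ge (v : Fin n → 𝕜) (i : Fin n) : ‖v i‖ ≤ ‖diagonal v‖ := by
  rw [Matrix.cstar_norm_def]
  have h := (toEuclideanCLM (n := Fin n) (𝕜 := 𝕜) (diagonal v)).le_opNorm (EuclideanSpace.single i 1)
  rw [EuclideanSpace.norm_single, norm_one, mul_one] at h
  refine le_trans ?_ h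
  have hx : (Matrix.toEuclideanCLM (n := Fin n) (𝕜 := 𝕜) (diagonal v) (EuclideanSpace.single i 1)) i = v i := by
    have h2 : (WithLp.equiv 2 (Fin n → 𝕜)) ((toEuclideanCLM (n := Fin n) (𝕜 := 𝕜) (diagonal v)) (EuclideanSpace.single i 1)) i = (toLin' (diagonal v)) ((WithLp.equiv 2 (Fin n → 𝕜)) (EuclideanSpace.single i 1)) i := by
      exact congrFun (Matrix.ofLp_toEuclideanCLM _ _) i
    rw [Matrix.toLin'_apply, Matrix.mulVec_diagonal] at h2
    simp only [EuclideanSpace.single] at h2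
    simpa using h2
  calc ‖v i‖ = ‖(Matrix.toEuclideanCLM (n := Fin n) (𝕜 := 𝕜) (diagonal v) (EuclideanSpace.single i 1)) i‖ := by rw [hx]
  _ ≤ _ := by
    set y := Matrix.toEuclideanCLM (n := Fin n) (𝕜 := 𝕜) (diagonal v) (EuclideanSpace.single i 1)
    rw [EuclideanSpace.norm_eq, ← Real.sqrt_sq (norm_nonneg (y i))]
    apply Real.sqrt_le_sqrt
    exact Finset.single_le_sum (f := fun j => ‖y j‖^2) (fun j _ => by positivity) (Finset.mem_univ i)


lemma exists_unitary_close_of_isUnit (Z : Matrix (Fin n) (Fin n) 𝕜) (hZ : IsUnit Z.det) :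
    ∃ O ∈ Matrix.unitaryGroup (Fin n) 𝕜, ‖Z - O‖ ≤ Real.sqrt ‖1 - Zᴴ * Z‖ := by
  classical
  have hPSD : (Zᴴ * Z).PosSemidef := posSemidef_conjTranspose_mul_self Z
  have hS : (Zᴴ * Z).IsHermitian := hPSD.1
  set S := Zᴴ * Z with hSdef
  set V : Matrix (Fin n) (Fin n) 𝕜 := (IsHermitian.eigenvectorUnitary hS : Matrix (Fin n) (Fin n) 𝕜) with hVdef
  have hVmem : V ∈ Matrix.unitaryGroup (Fin n) 𝕜 := (IsHermitian.eigenvectorUnitary hS).2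
  have hVV : star V * V = 1 := mem_unitaryGroup_iff'.mp hVmem
  have hVV' : V * star V = 1 := mem_unitaryGroup_iff.mp hVmem
  have hlpos : ∀ i, 0 < hS.eigenvalues i := by
    intro i
    rcases lt_or_eq_of_le (hPSD.eigenvalues_nonneg i) with h | h
    · exact h
    · exfalso
      have hdet : IsUnit S.det := by
        rw [hSdef, det_mul, det_conjTranspose]
        exact (hZ.star).mul hZ
      rw [hS.det_eq_prod_eigenvalues] at hdet
      have : ((hS.eigenvalues i : 𝕜)) = 0 := by rw [← h]; simp
      exact hdet.ne_zero (Finset.prod_eq_zero (Finset.mem_univ i) this)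
  set d : Fin n → 𝕜 := fun i => ((Real.sqrt (hS.eigenvalues i) : ℝ) : 𝕜) with hd
  have hdne : ∀ i, d i ≠ 0 := by
    intro i
    simp only [hd, ne_eq, RCLike.ofReal_eq_zero]
    exact (Real.sqrt_pos.mpr (hlpos i)).ne'
  set R : Matrix (Fin n) (Fin n) 𝕜 := V * diagonal d * star V with hR
  set Rinv : Matrix (Fin n) (Fin n) 𝕜 := V * diagonal (fun i => (d i)⁻¹) * star V with hRinv
  have key : ∀ (a b : Fin n → 𝕜), (V * diagonal a * star V) * (V * diagonal b * star V)
      = V * diagonal (fun i => a i * b i) * star V := by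
    intro a b
    calc (V * diagonal a * star V) * (V * diagonal b * star V)
        = V * diagonal a * (star V * V) * (diagonal b * star V) := by
          simp only [Matrix.mul_assoc]
      _ = V * (diagonal a * diagonal b) * star V := by
          rw [hVV, Matrix.mul_one]; simp only [Matrix.mul_assoc]
      _ = _ := by rw [diagonal_mul_diagonal]
  have hRR : R * R = S := by
    rw [hR, key]
    have : (fun i => d i * d i) = (RCLike.ofReal ∘ hS.eigenvalues) := by
      funext i
      simp only [hd, Function.comp]
      rw [← RCLike.ofReal_mul, Real.mul_self_sqrt (hPSD.eigenvalues_nonneg i)]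
    rw [this]; exact hS.spectral_theorem.symm
  have hRRinv : R * Rinv = 1 := by
    rw [hR, hRinv, key]
    have : (fun i => d i * (d i)⁻¹) = fun _ => (1:𝕜) := by
      funext i; exact mul_inv_cancel₀ (hdne i)
    rw [this, diagonal_one, Matrix.mul_one, hVV']
  have hRinvR : Rinv * R = 1 := by
    rw [hR, hRinv, key]
    have : (fun i => (d i)⁻¹ * d i) = fun _ => (1:𝕜) := by
      funext i; exact inv_mul_cancel₀ (hdne i)
    rw [this, diagonal_one, Matrix.mul_one, hVV']
  have hRinvH : Rinvᴴ = Rinv := by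
    rw [hRinv]
    simp only [conjTranspose_mul, conjTranspose_conjTranspose, diagonal_conjTranspose]
    have h2 : star (fun i => (d i)⁻¹) = fun i => (d i)⁻¹ := by
      funext i
      simp only [hd, Pi.star_apply, ← RCLike.ofReal_inv, RCLike.star_def, RCLike.conj_ofReal]
    rw [h2]
    simp [star_eq_conjTranspose, Matrix.mul_assoc]
  set O : Matrix (Fin n) (Fin n) 𝕜 := Z * Rinv with hO
  have hOmem : O ∈ Matrix.unitaryGroup (Fin n) 𝕜 := by
    rw [mem_unitaryGroup_iff']
    show (Z * Rinv)ᴴ * (Z * Rinv) = 1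
    rw [conjTranspose_mul, hRinvH]
    calc Rinv * Zᴴ * (Z * Rinv) = Rinv * (Zᴴ * Z) * Rinv := by
          simp only [Matrix.mul_assoc]
      _ = Rinv * (R * R) * Rinv := by rw [hRR]
      _ = (Rinv * R) * (R * Rinv) := by simp only [Matrix.mul_assoc]
      _ = 1 := by rw [hRinvR, hRRinv, Matrix.mul_one]
  refine ⟨O, hOmem, ?_⟩
  have hZO : Z - O = O * (R - 1) := by
    rw [Matrix.mul_sub, Matrix.mul_one, hO, Matrix.mul_assoc, hRinvR, Matrix.mul_one]
  rw [hZO, CStarRing.norm_mem_unitary_mul _ hOmem]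
  have hR1 : R - 1 = V * (diagonal (fun i => d i - 1)) * star V := by
    have : diagonal (fun i => d i - 1) = diagonal d - 1 := by
      rw [← diagonal_one]
      rw [diagonal_sub]
    rw [this, Matrix.mul_sub, Matrix.sub_mul, Matrix.mul_one, hVV', hR]
  have hS1 : (1 : Matrix (Fin n) (Fin n) 𝕜) - S
      = V * (diagonal (fun i => 1 - (hS.eigenvalues i : 𝕜))) * star V := by
    have : diagonal (fun i => 1 - (hS.eigenvalues i : 𝕜))
        = 1 - diagonal (RCLike.ofReal ∘ hS.eigenvalues) := by
      rw [← diagonal_one, diagonal_sub]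
      rfl
    rw [this, Matrix.mul_sub, Matrix.sub_mul, Matrix.mul_one, hVV']
    exact congrArg (1 - ·) hS.spectral_theorem
  have hnormR1 : ‖R - 1‖ = ‖diagonal (fun i => d i - 1)‖ := by
    rw [hR1, CStarRing.norm_mul_mem_unitary _ (Unitary.star_mem hVmem),
      CStarRing.norm_mem_unitary_mul _ hVmem]
  have hnormS1 : ‖(1:Matrix (Fin n) (Fin n) 𝕜) - S‖
      = ‖diagonal (fun i => 1 - (hS.eigenvalues i : 𝕜))‖ := by
    rw [hS1, CStarRing.norm_mul_mem_unitary _ (Unitary.star_mem hVmem),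
      CStarRing.norm_mem_unitary_mul _ hVmem]
  rw [hnormR1]
  apply l2_norm_diagonal_le _ (Real.sqrt_nonneg _)
  intro i
  have hbound : |hS.eigenvalues i - 1| ≤ ‖(1:Matrix (Fin n) (Fin n) 𝕜) - S‖ := by
    rw [hnormS1]
    have h3 := l2_norm_diagonal_ge (fun i => 1 - (hS.eigenvalues i : 𝕜)) i
    calc |hS.eigenvalues i - 1| = ‖(1:𝕜) - (hS.eigenvalues i : 𝕜)‖ := by
          rw [show (1:𝕜) - (hS.eigenvalues i : 𝕜) = ((1 - hS.eigenvalues i : ℝ) : 𝕜) by push_cast; ring]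
          rw [RCLike.norm_ofReal, abs_sub_comm]
      _ ≤ _ := h3
  calc ‖d i - 1‖ = |Real.sqrt (hS.eigenvalues i) - 1| := by
        rw [show d i - 1 = ((Real.sqrt (hS.eigenvalues i) - 1 : ℝ) : 𝕜) by push_cast [hd]; ring]
        rw [RCLike.norm_ofReal]
    _ ≤ Real.sqrt |hS.eigenvalues i - 1| := sq_sqrt_sub_one_le (hPSD.eigenvalues_nonneg i)
    _ ≤ Real.sqrt ‖(1:Matrix (Fin n) (Fin n) 𝕜) - S‖ := Real.sqrt_le_sqrt hbound

lemma exists_unitary_close (Z : Matrix (Fin n) (Fin n) 𝕜) :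
    ∃ O ∈ Matrix.unitaryGroup (Fin n) 𝕜, ‖Z - O‖ ≤ Real.sqrt ‖1 - Zᴴ * Z‖ := by
  classical
  rcases Nat.eq_zero_or_pos n with hn | hn
  · refine ⟨1, one_mem _, ?_⟩
    subst hn
    have : Z - 1 = 0 := by
      ext i j
      exact i.elim0
    rw [this, norm_zero]
    exact Real.sqrt_nonneg _
  haveI : NeZero n := ⟨hn.ne'⟩
  haveI : Nontrivial (Matrix (Fin n) (Fin n) 𝕜) := by
    refine ⟨0, 1, fun h => ?_⟩
    have := congrFun (congrFun h ⟨0, hn⟩) ⟨0, hn⟩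
    simp [Matrix.one_apply] at this
  -- the set of bad real shifts is finite
  have hTfin : {t : ℝ | ¬ IsUnit (Z - (t:𝕜) • 1).det}.Finite := by
    have hsub : {t : ℝ | ¬ IsUnit (Z - (t:𝕜) • 1).det}
        ⊆ ((↑) : ℝ → 𝕜) ⁻¹' (spectrum 𝕜 Z) := by
      intro t ht
      simp only [Set.mem_setOf_eq] at ht
      rw [Set.mem_preimage, spectrum.mem_iff]
      intro hu
      apply ht
      rw [← Matrix.isUnit_iff_isUnit_det]
      have : Z - (t:𝕜) • 1 = -(algebraMap 𝕜 (Matrix (Fin n) (Fin n) 𝕜) (t:𝕜) - Z) := by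
        rw [Algebra.algebraMap_eq_smul_one, neg_sub]
      rw [this]
      exact hu.neg
    exact ((Matrix.finite_spectrum Z).preimage
      ((RCLike.ofReal_injective (K := 𝕜)).injOn)).subset hsub
  -- choose good shifts tending to zero
  have hchoice : ∀ k : ℕ, ∃ t : ℝ, t ∈ Set.Ioo (0:ℝ) (1/(k+1:ℝ)) ∧ IsUnit (Z - (t:𝕜) • 1).det := by
    intro k
    have hIoo : (Set.Ioo (0:ℝ) (1/(k+1))).Infinite :=
      Set.Ioo_infinite (by positivity)
    obtain ⟨t, ht⟩ := (hIoo.diff hTfin).nonempty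
    exact ⟨t, ht.1, not_not.mp ht.2⟩
  choose t ht htu using hchoice
  set W : ℕ → Matrix (Fin n) (Fin n) 𝕜 := fun k => Z - ((t k : 𝕜)) • 1 with hW
  choose O hOmem hOle using fun k => exists_unitary_close_of_isUnit (W k) (htu k)
  -- t tends to 0
  have httend : Filter.Tendsto t Filter.atTop (nhds 0) := by
    exact squeeze_zero (fun k => (ht k).1.le) (fun k => (ht k).2.le)
      tendsto_one_div_add_atTop_nhds_zero_nat
  have hWtend : Filter.Tendsto W Filter.atTop (nhds Z) := by
    have : Filter.Tendsto (fun k => ((t k : 𝕜)) • (1 : Matrix (Fin n) (Fin n) 𝕜))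
        Filter.atTop (nhds 0) := by
      have h1 : Filter.Tendsto (fun k => ((t k : 𝕜))) Filter.atTop (nhds 0) := by
        have := (RCLike.continuous_ofReal (K := 𝕜)).tendsto (0:ℝ)
        have h0 := this.comp httend
        simp only [RCLike.ofReal_zero] at h0
        exact h0
      simpa using h1.smul (tendsto_const_nhds (x := (1 : Matrix (Fin n) (Fin n) 𝕜)))
    have h2 := (tendsto_const_nhds (x := Z) (f := Filter.atTop (α := ℕ))).sub this
    rw [sub_zero] at h2
    exact h2
  -- compactness of the unitary group
  haveI : FiniteDimensional 𝕜 (Matrix (Fin n) (Fin n) 𝕜) := by infer_instance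
  haveI : ProperSpace (Matrix (Fin n) (Fin n) 𝕜) := FiniteDimensional.proper 𝕜 _
  have hclosed : IsClosed {U : Matrix (Fin n) (Fin n) 𝕜 | U ∈ Matrix.unitaryGroup (Fin n) 𝕜} := by
    have : {U : Matrix (Fin n) (Fin n) 𝕜 | U ∈ Matrix.unitaryGroup (Fin n) 𝕜}
        = (fun U : Matrix (Fin n) (Fin n) 𝕜 => Uᴴ * U) ⁻¹' {1} := by
      ext U
      simp only [Set.mem_setOf_eq, Set.mem_preimage, Set.mem_singleton_iff]
      rw [mem_unitaryGroup_iff']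
      rfl
    rw [this]
    exact IsClosed.preimage
      ((continuous_id.matrix_conjTranspose).matrix_mul continuous_id) isClosed_singleton
  have hbdd : Bornology.IsBounded
      {U : Matrix (Fin n) (Fin n) 𝕜 | U ∈ Matrix.unitaryGroup (Fin n) 𝕜} := by
    apply Bornology.IsBounded.subset (Metric.isBounded_closedBall (x := 0) (r := 1))
    intro U hU
    rw [Metric.mem_closedBall, dist_zero_right]
    exact le_of_eq (CStarRing.norm_of_mem_unitary hU)
  have hcompact := Metric.isCompact_of_isClosed_isBounded hclosed hbdd
  obtain ⟨U, hUmem, φ, hφ, hOtend⟩ := hcompact.tendsto_subseq (fun k => hOmem k)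
  refine ⟨U, hUmem, ?_⟩
  have hWφ : Filter.Tendsto (fun k => W (φ k)) Filter.atTop (nhds Z) :=
    hWtend.comp hφ.tendsto_atTop
  have h1 : Filter.Tendsto (fun k => ‖W (φ k) - O (φ k)‖) Filter.atTop (nhds ‖Z - U‖) :=
    (hWφ.sub hOtend).norm
  have gcont : Continuous (fun X : Matrix (Fin n) (Fin n) 𝕜 => Real.sqrt ‖1 - Xᴴ * X‖) := by
    apply Real.continuous_sqrt.comp
    exact (continuous_const.sub ((continuous_id.matrix_conjTranspose).matrix_mul continuous_id)).norm
  have h2 : Filter.Tendsto (fun k => Real.sqrt ‖1 - (W (φ k))ᴴ * (W (φ k))‖)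
      Filter.atTop (nhds (Real.sqrt ‖1 - Zᴴ * Z‖)) :=
    (gcont.tendsto Z).comp hWφ
  exact le_of_tendsto_of_tendsto' h1 h2 (fun k => hOle (φ k))

lemma opNorm_eq_norm (A : Matrix (Fin n) (Fin n) 𝕜) :
    ‖Matrix.toEuclideanCLM (𝕜 := 𝕜) A‖ = ‖A‖ := rfl

lemma main_aux (Z : Matrix (Fin n) (Fin n) 𝕜) (δ : ℝ)
    (h : ‖(1 : Matrix (Fin n) (Fin n) 𝕜) - Zᴴ * Z‖ ≤ δ) :
    ∃ O ∈ Matrix.unitaryGroup (Fin n) 𝕜, ‖Z - O‖ ≤ Real.sqrt δ := by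
  obtain ⟨O, hO, hle⟩ := exists_unitary_close Z
  exact ⟨O, hO, hle.trans (Real.sqrt_le_sqrt h)⟩


end Helpers

theorem stmt_11 :
    (∀ (n : ℕ) (Z : Matrix (Fin n) (Fin n) ℂ) (δ : ℝ),
      opNorm ((1 : Matrix (Fin n) (Fin n) ℂ) - Zᴴ * Z) ≤ δ →
      ∃ O ∈ Matrix.unitaryGroup (Fin n) ℂ, opNorm (Z - O) ≤ Real.sqrt δ) ∧
    (∀ (n : ℕ) (Z : Matrix (Fin n) (Fin n) ℝ) (δ : ℝ),
      opNorm ((1 : Matrix (Fin n) (Fin n) ℝ) - Zᵀ * Z) ≤ δ →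
      ∃ O ∈ Matrix.orthogonalGroup (Fin n) ℝ, opNorm (Z - O) ≤ Real.sqrt δ) := by
  constructor
  · intro n Z δ h
    exact main_aux Z δ h
  · intro n Z δ h
    have hT : Zᴴ = Zᵀ := by
      ext i j
      simp [Matrix.conjTranspose_apply]
    exact main_aux Z δ (by rw [hT]; exact h)
end
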